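/- arXiv:2406.07206 — 2 statements merged into one kernel-verified Lean document; each statement's English description precedes it below -/
import Mathlib

section
/- For every δ > 0 there is a constant C(δ) such that for all n ≥ 1 and all h ∈ ℤ³\{0}: Σ_{k ∈ ℤ²\{0}, 1 ≤ |h+k| ≤ |h|/2, n ≤ |k| ≤ 2n} |h|² / (|k|² |h+k|^{2+δ}) ≤ C(δ), where k ∈ ℤ²\{0} is identified with (k₁,k₂,0) ∈ ℤ³. -/
open scoped BigOperators Classical

/-- Euclidean norm of an integer lattice point in `ℤ³`. -/
noncomputable def nrm3 (k : Fin 3 → ℤ) : ℝ :=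
  Real.sqrt (((k 0 : ℝ)) ^ 2 + ((k 1 : ℝ)) ^ 2 + ((k 2 : ℝ)) ^ 2)

/-- Euclidean norm of an integer lattice point in `ℤ²`. -/
noncomputable def nrm2 (k : Fin 2 → ℤ) : ℝ :=
  Real.sqrt (((k 0 : ℝ)) ^ 2 + ((k 1 : ℝ)) ^ 2)

/-- A point of `ℤ²` identified with `(k₁, k₂, 0) ∈ ℤ³`. -/
def emb2 (k : Fin 2 → ℤ) : Fin 3 → ℤ := ![k 0, k 1, 0]

lemma nrm3_nonneg (k : Fin 3 → ℤ) : 0 ≤ nrm3 k := Real.sqrt_nonneg _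
lemma nrm2_nonneg (k : Fin 2 → ℤ) : 0 ≤ nrm2 k := Real.sqrt_nonneg _

noncomputable def toE3 (k : Fin 3 → ℤ) : EuclideanSpace ℝ (Fin 3) := WithLp.toLp 2 (fun i => (k i : ℝ))

lemma nrm3_eq (k : Fin 3 → ℤ) : nrm3 k = ‖toE3 k‖ := by
  rw [EuclideanSpace.norm_eq]
  simp [nrm3, toE3, Fin.sum_univ_three, sq_abs, add_assoc]

lemma nrm3_add_le (a b : Fin 3 → ℤ) : nrm3 (a + b) ≤ nrm3 a + nrm3 b := by
  have h : toE3 (a + b) = toE3 a + toE3 b := by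
    ext i; simp [toE3]
  rw [nrm3_eq, nrm3_eq, nrm3_eq, h]
  exact norm_add_le _ _

lemma nrm3_emb2 (k : Fin 2 → ℤ) : nrm3 (emb2 k) = nrm2 k := by
  simp [nrm3, nrm2, emb2]

lemma nrm2_le_nrm3 (h : Fin 3 → ℤ) (k : Fin 2 → ℤ) :
    nrm2 (![h 0, h 1] + k) ≤ nrm3 (h + emb2 k) := by
  apply Real.sqrt_le_sqrt
  have : (0:ℝ) ≤ ((h 2 : ℝ)) ^ 2 := sq_nonneg _
  simp [nrm2, nrm3, emb2, Pi.add_apply]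
  nlinarith [sq_nonneg ((h 2 : ℝ))]

lemma norm_le_nrm2 (z : Fin 2 → ℤ) : ‖z‖ ≤ nrm2 z := by
  rw [EisensteinSeries.norm_eq_max_natAbs]
  have h0 : (|((z 0 : ℝ))|) ≤ nrm2 z := by
    rw [← Real.sqrt_sq_eq_abs]
    exact Real.sqrt_le_sqrt (by nlinarith [sq_nonneg ((z 1 : ℝ))])
  have h1 : (|((z 1 : ℝ))|) ≤ nrm2 z := by
    rw [← Real.sqrt_sq_eq_abs]
    exact Real.sqrt_le_sqrt (by nlinarith [sq_nonneg ((z 0 : ℝ))])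
  have e0 : ((z 0).natAbs : ℝ) = |((z 0 : ℝ))| := by
    rw [Nat.cast_natAbs]; push_cast; rfl
  have e1 : ((z 1).natAbs : ℝ) = |((z 1 : ℝ))| := by
    rw [Nat.cast_natAbs]; push_cast; rfl
  calc ((max (z 0).natAbs (z 1).natAbs : ℕ) : ℝ) = max ((z 0).natAbs : ℝ) ((z 1).natAbs : ℝ) := by
        push_cast [Nat.cast_max]; rfl
    _ ≤ nrm2 z := by rw [e0, e1]; exact max_le h0 h1

lemma nrm3_neg (k : Fin 3 → ℤ) : nrm3 (-k) = nrm3 k := by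
  simp only [nrm3, Pi.neg_apply, Int.cast_neg, neg_sq]

lemma one_le_norm_int (z : Fin 2 → ℤ) (hz : z ≠ 0) : (1:ℝ) ≤ ‖z‖ := by
  rw [EisensteinSeries.norm_eq_max_natAbs]
  have : 1 ≤ max (z 0).natAbs (z 1).natAbs := by
    by_contra hlt
    push_neg at hlt
    apply hz
    funext i
    fin_cases i <;> simp_all
  exact_mod_cast this

/-- For every `δ > 0` there is `C(δ)` such that for all `n ≥ 1` and `h ∈ ℤ³\{0}`:
`Σ_{k ∈ ℤ²\{0}, 1 ≤ |h+k| ≤ |h|/2, n ≤ |k| ≤ 2n} |h|²/(|k|² |h+k|^{2+δ}) ≤ C(δ)`. -/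
theorem lattice_convolution_bound_2d (δ : ℝ) (hδ : 0 < δ) :
    ∃ C > 0, ∀ n : ℕ, 1 ≤ n → ∀ h : Fin 3 → ℤ, h ≠ 0 →
      (∑' k : Fin 2 → ℤ,
        if k ≠ 0 ∧ 1 ≤ nrm3 (h + emb2 k) ∧ nrm3 (h + emb2 k) ≤ nrm3 h / 2 ∧
            (n : ℝ) ≤ nrm2 k ∧ nrm2 k ≤ 2 * n then
          nrm3 h ^ 2 / (nrm2 k ^ 2 * nrm3 (h + emb2 k) ^ (2 + δ)) else 0) ≤ C := by
  have hp2 : (2:ℝ) < 2 + δ := by linarith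
  set g : (Fin 2 → ℤ) → ℝ := fun z => 4 * (max 1 ‖z‖) ^ (-(2 + δ)) with hg_def
  have hg_nonneg : ∀ z, 0 ≤ g z := by
    intro z
    have : (0:ℝ) < max 1 ‖z‖ := lt_of_lt_of_le one_pos (le_max_left _ _)
    positivity
  have hg_summable : Summable g := by
    have hmaj : Summable (fun z : Fin 2 → ℤ =>
        4 * ‖z‖ ^ (-(2 + δ)) + (if z = 0 then (4:ℝ) else 0)) := by
      refine ((EisensteinSeries.summable_one_div_norm_rpow hp2).mul_left 4).add ?_
      apply summable_of_ne_finset_zero (s := ({0} : Finset (Fin 2 → ℤ)))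
      intro z hz
      simp only [Finset.mem_singleton] at hz
      simp [hz]
    refine Summable.of_nonneg_of_le hg_nonneg ?_ hmaj
    intro z
    by_cases hz : z = 0
    · subst hz
      have : (-(2+δ)) ≠ 0 := by linarith
      simp [hg_def, Real.zero_rpow this]
      exact Real.rpow_nonneg le_rfl _
    · have h1 : (1:ℝ) ≤ ‖z‖ := one_le_norm_int z hz
      rw [hg_def]
      simp only [max_eq_right h1, hz, if_neg, ite_false, add_zero]
      exact le_refl _
  refine ⟨∑' z, g z, ?_, ?_⟩
  · refine Summable.tsum_pos hg_summable hg_nonneg 0 ?_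
    simp [hg_def]
  · intro n hn h hh
    set hh2 : Fin 2 → ℤ := ![h 0, h 1] with hh2_def
    have hGsum : Summable (fun k => g (hh2 + k)) := by
      have := (Equiv.addLeft hh2).summable_iff (f := g)
      exact this.2 hg_summable
    have hf_le : ∀ k : Fin 2 → ℤ,
        (if k ≠ 0 ∧ 1 ≤ nrm3 (h + emb2 k) ∧ nrm3 (h + emb2 k) ≤ nrm3 h / 2 ∧
            (n : ℝ) ≤ nrm2 k ∧ nrm2 k ≤ 2 * n then
          nrm3 h ^ 2 / (nrm2 k ^ 2 * nrm3 (h + emb2 k) ^ (2 + δ)) else 0) ≤ g (hh2 + k) := by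
      intro k
      by_cases hc : k ≠ 0 ∧ 1 ≤ nrm3 (h + emb2 k) ∧ nrm3 (h + emb2 k) ≤ nrm3 h / 2 ∧
          (n : ℝ) ≤ nrm2 k ∧ nrm2 k ≤ 2 * n
      · rw [if_pos hc]
        obtain ⟨hk0, h1le, hle2, hnk, hk2n⟩ := hc
        set a := nrm3 h
        set b := nrm2 k
        set c := nrm3 (h + emb2 k)
        set M := ‖hh2 + k‖
        have hb1 : (1:ℝ) ≤ b := le_trans (by exact_mod_cast hn) hnk
        have ha2b : a ≤ 2 * b := by
          have heq : h = (h + emb2 k) + (-(emb2 k)) := by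
            funext i; simp
          have h3 : a ≤ c + nrm3 (-(emb2 k)) := by
            rw [show a = nrm3 ((h + emb2 k) + (-(emb2 k))) from by rw [← heq]]
            exact nrm3_add_le _ _
          rw [nrm3_neg, nrm3_emb2] at h3
          linarith
        have hcM : max 1 M ≤ c := by
          refine max_le h1le (le_trans (norm_le_nrm2 _) ?_)
          exact nrm2_le_nrm3 h k
        have hMpos : (0:ℝ) < max 1 M := lt_of_lt_of_le one_pos (le_max_left _ _)
        have hrp : (max 1 M) ^ (2+δ) ≤ c ^ (2+δ) :=
          Real.rpow_le_rpow hMpos.le hcM (by linarith)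
        have hrpos : (0:ℝ) < (max 1 M) ^ (2+δ) := Real.rpow_pos_of_pos hMpos _
        have ha0 : 0 ≤ a := nrm3_nonneg h
        have key : a ^ 2 / (b ^ 2 * c ^ (2+δ)) ≤ (4 * b ^ 2) / (b ^ 2 * (max 1 M) ^ (2+δ)) := by
          apply div_le_div₀ (by positivity) (by nlinarith) (by positivity)
          exact mul_le_mul_of_nonneg_left hrp (by positivity)
        have hb0 : b ≠ 0 := by positivity
        have heq2 : (4 * b ^ 2) / (b ^ 2 * (max 1 M) ^ (2+δ)) = g (hh2 + k) := by
          rw [hg_def]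
          simp only
          rw [Real.rpow_neg hMpos.le]
          field_simp
        rw [heq2] at key
        exact key
      · rw [if_neg hc]
        exact hg_nonneg _
    have hf_nonneg : ∀ k : Fin 2 → ℤ,
        0 ≤ (if k ≠ 0 ∧ 1 ≤ nrm3 (h + emb2 k) ∧ nrm3 (h + emb2 k) ≤ nrm3 h / 2 ∧
            (n : ℝ) ≤ nrm2 k ∧ nrm2 k ≤ 2 * n then
          nrm3 h ^ 2 / (nrm2 k ^ 2 * nrm3 (h + emb2 k) ^ (2 + δ)) else 0) := by
      intro k
      split
      · have h1 : 0 ≤ nrm3 h := nrm3_nonneg h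
        have h2 : 0 ≤ nrm2 k := nrm2_nonneg k
        have h3 : 0 ≤ nrm3 (h + emb2 k) := nrm3_nonneg _
        positivity
      · exact le_refl _
    have hf_sum : Summable (fun k : Fin 2 → ℤ =>
        if k ≠ 0 ∧ 1 ≤ nrm3 (h + emb2 k) ∧ nrm3 (h + emb2 k) ≤ nrm3 h / 2 ∧
            (n : ℝ) ≤ nrm2 k ∧ nrm2 k ≤ 2 * n then
          nrm3 h ^ 2 / (nrm2 k ^ 2 * nrm3 (h + emb2 k) ^ (2 + δ)) else 0) :=
      Summable.of_nonneg_of_le hf_nonneg hf_le hGsum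
    calc _ ≤ ∑' k, g (hh2 + k) := Summable.tsum_le_tsum hf_le hf_sum hGsum
      _ = ∑' z, g z := (Equiv.addLeft hh2).tsum_eq g
end

section
/- Let B̄ : [0,T] → H¹(𝕋³;ℝ³) be a (sufficiently regular) zero-mean divergence-free solution of ∂_t B̄ = (η + η_iso)ΔB̄ + ∇×(A_ρ B̄), where η, η_iso > 0, A_ρ = (2πρ log 2/(C₁C₂))·diag(1,1,0) with |ρ| ≤ 1 and C₁, C₂ > 0, and η_iso = 2ζ_{s,3}/(3C_V²) with ζ_{s,3} = 4π log 2 and C₁ = C₂ = C_V. Then for all t ∈ [0,T]: ‖B̄_t‖_{L²} ≤ ‖B̄_0‖_{L²} · exp(−(η + (8 − 6|ρ|)π log 2/(3C_V²)) t). -/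
open scoped BigOperators Classical

/-- Cross product of vectors in `ℂ³`. -/
noncomputable def crossC (u v : Fin 3 → ℂ) : Fin 3 → ℂ :=
  ![u 1 * v 2 - u 2 * v 1, u 2 * v 0 - u 0 * v 2, u 0 * v 1 - u 1 * v 0]

/-- Squared Euclidean norm of a vector in `ℂ³`. -/
noncomputable def vnSq (v : Fin 3 → ℂ) : ℝ := ∑ i, ‖v i‖ ^ 2

/-- An integer lattice point viewed as a complex vector. -/
noncomputable def intC (k : Fin 3 → ℤ) : Fin 3 → ℂ := fun i => (k i : ℂ)

set_option maxHeartbeats 1000000 in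
lemma mode_decay (A c lam : ℝ) (hAc : |c| ≤ A) (hlam : lam ≤ A - |c|)
    (k : Fin 3 → ℤ) (hk : 1 ≤ nrm3 k) (g : ℝ → Fin 3 → ℂ)
    (hode : ∀ s, HasDerivAt g
      (fun i => ((-A * nrm3 k ^ 2 : ℝ) : ℂ) * g s i
        + Complex.I * crossC (intC k)
            (fun i' => if i' = 2 then 0 else ((c : ℝ) : ℂ) * g s i') i) s) :
    ∀ t, 0 ≤ t → vnSq (g t) ≤ vnSq (g 0) * Real.exp (-2 * lam * t) := by
  intro t ht
  set N := nrm3 k with hNdef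
  have hN0 : (0:ℝ) ≤ N := le_trans zero_le_one hk
  have hK : N ^ 2 = ((k 0 : ℝ)) ^ 2 + ((k 1 : ℝ)) ^ 2 + ((k 2 : ℝ)) ^ 2 := by
    rw [hNdef, nrm3, Real.sq_sqrt (by positivity)]
  -- derivative vector
  set D : ℝ → Fin 3 → ℂ := fun s i => ((-A * N ^ 2 : ℝ) : ℂ) * g s i
        + Complex.I * crossC (intC k)
            (fun i' => if i' = 2 then 0 else ((c : ℝ) : ℂ) * g s i') i with hD
  -- the energy and its derivative
  have hf' : ∀ s, HasDerivAt (fun u => vnSq (g u))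
      (∑ i, ((D s i).re * (g s i).re + (g s i).re * (D s i).re
        + ((D s i).im * (g s i).im + (g s i).im * (D s i).im))) s := by
    intro s
    have hfe : (fun u => vnSq (g u))
        = fun u => ∑ i, ((g u i).re * (g u i).re + (g u i).im * (g u i).im) := by
      funext u
      simp [vnSq, Complex.sq_norm, Complex.normSq_apply]
    rw [hfe]
    apply HasDerivAt.fun_sum
    intro i _
    have hi : HasDerivAt (fun u => g u i) (D s i) s := (hasDerivAt_pi.mp (hode s)) i
    have hre : HasDerivAt (fun u => (g u i).re) ((D s i).re) s :=
      (Complex.reCLM.hasFDerivAt.comp_hasDerivAt s hi)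
    have him : HasDerivAt (fun u => (g u i).im) ((D s i).im) s :=
      (Complex.imCLM.hasFDerivAt.comp_hasDerivAt s hi)
    exact (hre.mul hre).add (him.mul him)
  -- derivative bound
  have hbound : ∀ s, (∑ i, ((D s i).re * (g s i).re + (g s i).re * (D s i).re
        + ((D s i).im * (g s i).im + (g s i).im * (D s i).im)))
      ≤ -(2 * lam) * vnSq (g s) := by
    intro s
    set z : Fin 3 → ℂ := g s with hz
    set w : Fin 3 → ℂ := fun i => Complex.I * crossC (intC k)
            (fun i' => if i' = 2 then 0 else ((c : ℝ) : ℂ) * z i') i with hw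
    have hS0 : (0:ℝ) ≤ vnSq z := by
      apply Finset.sum_nonneg; intro i _; positivity
    -- decompose
    have hdecomp : (∑ i, ((D s i).re * (z i).re + (z i).re * (D s i).re
        + ((D s i).im * (z i).im + (z i).im * (D s i).im)))
        = -2 * A * N ^ 2 * vnSq z
          + 2 * ∑ i, ((starRingEnd ℂ) (z i) * w i).re := by
      have hDi : ∀ i, D s i = ((-A * N ^ 2 : ℝ) : ℂ) * z i + w i := fun i => rfl
      simp only [hDi, Fin.sum_univ_three, vnSq, Complex.sq_norm, Complex.normSq_apply,
        Complex.add_re, Complex.add_im, Complex.mul_re, Complex.mul_im,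
        Complex.ofReal_re, Complex.ofReal_im, Complex.conj_re, Complex.conj_im]
      ring
    rw [hdecomp]
    -- bound the cross term
    have hR : (∑ i, ((starRingEnd ℂ) (z i) * w i).re) ≤ |c| * N * vnSq z := by
      have hRe : (∑ i, ((starRingEnd ℂ) (z i) * w i).re)
          ≤ ∑ i, ‖z i‖ * ‖w i‖ := by
        apply Finset.sum_le_sum
        intro i _
        calc ((starRingEnd ℂ) (z i) * w i).re ≤ ‖(starRingEnd ℂ) (z i) * w i‖ :=
              Complex.re_le_norm _
          _ = ‖z i‖ * ‖w i‖ := by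
              rw [norm_mul, Complex.norm_conj]
      have hP0 : (0:ℝ) ≤ ∑ i, ‖z i‖ * ‖w i‖ := by
        apply Finset.sum_nonneg; intro i _; positivity
      have hCS : (∑ i, ‖z i‖ * ‖w i‖) ^ 2
          ≤ (vnSq z) * (vnSq w) := by
        have := Finset.sum_mul_sq_le_sq_mul_sq Finset.univ
          (fun i => ‖z i‖) (fun i => ‖w i‖)
        simpa [vnSq] using this
      have hW : vnSq w ≤ c ^ 2 * N ^ 2 * vnSq z := by
        have hw0 : w 0 = Complex.I * (-(((k 2 : ℝ)):ℂ) * (((c : ℝ) : ℂ) * z 1)) := by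
          simp [hw, crossC, intC]
        have hw1 : w 1 = Complex.I * ((((k 2 : ℝ)):ℂ) * (((c : ℝ) : ℂ) * z 0)) := by
          simp [hw, crossC, intC]
        have hw2 : w 2 = Complex.I * ((((k 0 : ℝ)):ℂ) * (((c : ℝ) : ℂ) * z 1)
            - (((k 1 : ℝ)):ℂ) * (((c : ℝ) : ℂ) * z 0)) := by
          simp [hw, crossC, intC]
        simp only [vnSq, Fin.sum_univ_three, Complex.sq_norm, hw0, hw1, hw2, hK]
        simp only [Complex.normSq_mul, Complex.normSq_I, one_mul, Complex.normSq_neg,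
          Complex.normSq_ofReal]
        simp only [Complex.normSq_apply, Complex.sub_re, Complex.sub_im,
          Complex.mul_re, Complex.mul_im, Complex.ofReal_re, Complex.ofReal_im]
        nlinarith [mul_nonneg (sq_nonneg c) (sq_nonneg ((k 0:ℝ)*(z 0).re+(k 1:ℝ)*(z 1).re)),
          mul_nonneg (sq_nonneg c) (sq_nonneg ((k 0:ℝ)*(z 0).im+(k 1:ℝ)*(z 1).im)),
          mul_nonneg (sq_nonneg c) (mul_nonneg
            (by positivity : (0:ℝ) ≤ (k 0:ℝ)^2+(k 1:ℝ)^2+(k 2:ℝ)^2)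
            (by positivity : (0:ℝ) ≤ (z 2).re^2+(z 2).im^2))]
      have hQ0 : (0:ℝ) ≤ |c| * N * vnSq z := by positivity
      have hsq : (∑ i, ‖z i‖ * ‖w i‖) ^ 2
          ≤ (|c| * N * vnSq z) ^ 2 := by
        calc (∑ i, ‖z i‖ * ‖w i‖) ^ 2
            ≤ (vnSq z) * (vnSq w) := hCS
          _ ≤ (vnSq z) * (c ^ 2 * N ^ 2 * vnSq z) := by
              exact mul_le_mul_of_nonneg_left hW hS0
          _ = (|c| * N * vnSq z) ^ 2 := by
              rw [← sq_abs c]; ring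
      nlinarith [hRe, hP0, hQ0, hsq]
    have h0 : (0:ℝ) ≤ |c| := abs_nonneg c
    nlinarith [hR, hS0, mul_nonneg (mul_nonneg (sub_nonneg.2 hk)
      (by nlinarith : (0:ℝ) ≤ A*(N+1) - |c|)) hS0]
  -- Gronwall
  set f : ℝ → ℝ := fun u => vnSq (g u) with hfdef
  have hG : ∀ s, HasDerivAt (fun u => f u * Real.exp (2 * lam * u))
      ((∑ i, ((D s i).re * (g s i).re + (g s i).re * (D s i).re
        + ((D s i).im * (g s i).im + (g s i).im * (D s i).im)))
          * Real.exp (2 * lam * s)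
        + f s * (Real.exp (2 * lam * s) * (2 * lam))) s := by
    intro s
    have he : HasDerivAt (fun u => Real.exp (2 * lam * u))
        (Real.exp (2 * lam * s) * (2 * lam)) s := by
      have := ((hasDerivAt_id s).const_mul (2 * lam)).exp
      simpa using this
    exact (hf' s).mul he
  have hanti : Antitone (fun u => f u * Real.exp (2 * lam * u)) := by
    apply antitone_of_deriv_nonpos
    · exact fun s => (hG s).differentiableAt
    · intro s
      rw [(hG s).deriv]
      have h1 := hbound s
      have h2 : (0:ℝ) < Real.exp (2 * lam * s) := Real.exp_pos _
      nlinarith [h1]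
  have hmain := hanti ht
  simp only [mul_zero, Real.exp_zero, mul_one] at hmain
  have hee : Real.exp (2 * lam * t) * Real.exp (-2 * lam * t) = 1 := by
    rw [← Real.exp_add]; ring_nf; exact Real.exp_zero
  have h2 := mul_le_mul_of_nonneg_right hmain (Real.exp_nonneg (-2 * lam * t))
  calc vnSq (g t) = f t * (Real.exp (2 * lam * t) * Real.exp (-2 * lam * t)) := by
        rw [hee, mul_one]
    _ = f t * Real.exp (2 * lam * t) * Real.exp (-2 * lam * t) := by ring
    _ ≤ f 0 * Real.exp (-2 * lam * t) := h2

lemma nrm3_one_le {k : Fin 3 → ℤ} (hk : k ≠ 0) : 1 ≤ nrm3 k := by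
  obtain ⟨i, hi⟩ := Function.ne_iff.mp hk
  have h1 : (1:ℝ) ≤ ((k i : ℝ)) ^ 2 := by
    have h2 : 1 ≤ |k i| := Int.one_le_abs (by simpa using hi)
    have h3 : (1:ℝ) ≤ |(k i : ℝ)| := by
      rw [← Int.cast_abs]; exact_mod_cast h2
    have h4 := mul_le_mul h3 h3 (by norm_num) (abs_nonneg _)
    rw [abs_mul_abs_self] at h4
    nlinarith
  have hsum : (1:ℝ) ≤ ((k 0 : ℝ)) ^ 2 + ((k 1 : ℝ)) ^ 2 + ((k 2 : ℝ)) ^ 2 := by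
    have h5 : ((k i : ℝ)) ^ 2 ≤ ∑ j : Fin 3, ((k j : ℝ)) ^ 2 :=
      Finset.single_le_sum (f := fun j => ((k j : ℝ)) ^ 2)
        (fun j _ => sq_nonneg _) (Finset.mem_univ i)
    rw [Fin.sum_univ_three] at h5
    linarith
  calc (1:ℝ) = Real.sqrt 1 := Real.sqrt_one.symm
    _ ≤ nrm3 k := Real.sqrt_le_sqrt hsum

lemma vnSq_nonneg (v : Fin 3 → ℂ) : 0 ≤ vnSq v := by
  apply Finset.sum_nonneg; intro i _; positivity


/-- Enhanced-dissipation decay for the isotropic mean-field equation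
`∂_t B̄ = (η + η_iso) Δ B̄ + ∇×(A_ρ B̄)` (in Fourier variables), with
`η_iso = 8π log 2/(3 C_V²)` and `A_ρ = (2πρ log 2/C_V²)·diag(1,1,0)`:
`‖B̄_t‖_{L²} ≤ ‖B̄_0‖_{L²} exp(-(η + (8-6|ρ|)π log 2/(3C_V²)) t)` on `[0,T]`. -/
theorem isotropic_enhanced_decay (T η CV ρ : ℝ)
    (hT : 0 ≤ T) (hη : 0 < η) (hCV : 0 < CV) (hρ : |ρ| ≤ 1)
    (B : ℝ → (Fin 3 → ℤ) → Fin 3 → ℂ)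
    (hmean : ∀ t, B t 0 = 0)
    (hdiv : ∀ t k, ∑ i, (k i : ℂ) * B t k i = 0)
    (hreg : ∀ t, Summable fun k : Fin 3 → ℤ => nrm3 k ^ 2 * vnSq (B t k))
    (hode : ∀ t (k : Fin 3 → ℤ),
      HasDerivAt (fun s => B s k)
        (fun i =>
          ((-(η + 8 * Real.pi * Real.log 2 / (3 * CV ^ 2)) * nrm3 k ^ 2 : ℝ) : ℂ) * B t k i
          + Complex.I *
              crossC (intC k)
                (fun i' => if i' = 2 then 0
                  else ((2 * Real.pi * ρ * Real.log 2 / CV ^ 2 : ℝ) : ℂ) * B t k i') i)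
        t) :
    ∀ t, 0 ≤ t → t ≤ T →
      Real.sqrt (∑' k : Fin 3 → ℤ, vnSq (B t k))
        ≤ Real.sqrt (∑' k : Fin 3 → ℤ, vnSq (B 0 k)) *
            Real.exp (-(η + (8 - 6 * |ρ|) * Real.pi * Real.log 2 / (3 * CV ^ 2)) * t) := by
  intro t ht _
  have hπ := Real.pi_pos
  have hl2 : (0:ℝ) < Real.log 2 := Real.log_pos one_lt_two
  have hCV2 : (0:ℝ) < CV ^ 2 := by positivity
  have habs : |2 * Real.pi * ρ * Real.log 2 / CV ^ 2|
      = 2 * Real.pi * |ρ| * Real.log 2 / CV ^ 2 := by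
    rw [abs_div, abs_of_pos hCV2, abs_mul, abs_mul, abs_mul, abs_two,
      abs_of_pos hπ, abs_of_pos hl2]
  have hAc : |2 * Real.pi * ρ * Real.log 2 / CV ^ 2|
      ≤ η + 8 * Real.pi * Real.log 2 / (3 * CV ^ 2) := by
    rw [habs]
    have h1 : 2 * Real.pi * |ρ| * Real.log 2 / CV ^ 2
        ≤ 8 * Real.pi * Real.log 2 / (3 * CV ^ 2) := by
      rw [div_le_div_iff₀ hCV2 (by positivity)]
      nlinarith [mul_le_mul_of_nonneg_right hρ
        (le_of_lt (mul_pos (mul_pos hπ hl2) hCV2)), abs_nonneg ρ,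
        mul_pos (mul_pos hπ hl2) hCV2]
    linarith
  have hlam : η + (8 - 6 * |ρ|) * Real.pi * Real.log 2 / (3 * CV ^ 2)
      ≤ (η + 8 * Real.pi * Real.log 2 / (3 * CV ^ 2))
        - |2 * Real.pi * ρ * Real.log 2 / CV ^ 2| := by
    rw [habs]
    have : (8 - 6 * |ρ|) * Real.pi * Real.log 2 / (3 * CV ^ 2)
        = 8 * Real.pi * Real.log 2 / (3 * CV ^ 2)
          - 2 * Real.pi * |ρ| * Real.log 2 / CV ^ 2 := by
      field_simp
      ring
    linarith
  -- per-mode decay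
  have hmode : ∀ k : Fin 3 → ℤ, vnSq (B t k)
      ≤ vnSq (B 0 k) * Real.exp (-2 * (η + (8 - 6 * |ρ|) * Real.pi * Real.log 2 / (3 * CV ^ 2)) * t) := by
    intro k
    by_cases hk : k = 0
    · subst hk
      simp [hmean, vnSq]
    · exact mode_decay (η + 8 * Real.pi * Real.log 2 / (3 * CV ^ 2))
        (2 * Real.pi * ρ * Real.log 2 / CV ^ 2)
        (η + (8 - 6 * |ρ|) * Real.pi * Real.log 2 / (3 * CV ^ 2))
        hAc hlam k (nrm3_one_le hk) (fun s => B s k) (fun s => hode s k) t ht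
  -- summability
  have hsum : ∀ s : ℝ, Summable (fun k : Fin 3 → ℤ => vnSq (B s k)) := by
    intro s
    apply Summable.of_nonneg_of_le (fun k => vnSq_nonneg _) _ (hreg s)
    intro k
    by_cases hk : k = 0
    · subst hk; simp [hmean, vnSq]
    · have h1 := nrm3_one_le hk
      have h2 : (1:ℝ) ≤ nrm3 k ^ 2 := by nlinarith
      calc vnSq (B s k) = 1 * vnSq (B s k) := (one_mul _).symm
        _ ≤ nrm3 k ^ 2 * vnSq (B s k) :=
            mul_le_mul_of_nonneg_right h2 (vnSq_nonneg _)
  have hsum2 : Summable (fun k : Fin 3 → ℤ => vnSq (B 0 k)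
      * Real.exp (-2 * (η + (8 - 6 * |ρ|) * Real.pi * Real.log 2 / (3 * CV ^ 2)) * t)) :=
    (hsum 0).mul_right _
  have h3 := Summable.tsum_le_tsum hmode (hsum t) hsum2
  rw [tsum_mul_right] at h3
  have hXnn : (0:ℝ) ≤ ∑' k : Fin 3 → ℤ, vnSq (B 0 k) :=
    tsum_nonneg (fun k => vnSq_nonneg _)
  have hexp : Real.exp (-2 * (η + (8 - 6 * |ρ|) * Real.pi * Real.log 2 / (3 * CV ^ 2)) * t)
      = Real.exp (-(η + (8 - 6 * |ρ|) * Real.pi * Real.log 2 / (3 * CV ^ 2)) * t)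
        * Real.exp (-(η + (8 - 6 * |ρ|) * Real.pi * Real.log 2 / (3 * CV ^ 2)) * t) := by
    rw [← Real.exp_add]; ring_nf
  calc Real.sqrt (∑' k : Fin 3 → ℤ, vnSq (B t k))
      ≤ Real.sqrt ((∑' k : Fin 3 → ℤ, vnSq (B 0 k))
          * Real.exp (-2 * (η + (8 - 6 * |ρ|) * Real.pi * Real.log 2 / (3 * CV ^ 2)) * t)) :=
        Real.sqrt_le_sqrt h3
    _ = Real.sqrt (∑' k : Fin 3 → ℤ, vnSq (B 0 k)) *
          Real.exp (-(η + (8 - 6 * |ρ|) * Real.pi * Real.log 2 / (3 * CV ^ 2)) * t) := by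
        rw [Real.sqrt_mul hXnn, hexp, Real.sqrt_mul_self (Real.exp_nonneg _)]
end
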